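/- In the alternating group A₅ on the five points {1,…,5}, every element generates a proper subgroup together with at least one of the three double transpositions (1,2)(3,4), (1,3)(2,4), (1,4)(2,3): for every σ ∈ A₅ there is τ ∈ {(1,2)(3,4), (1,3)(2,4), (1,4)(2,3)} such that ⟨σ, τ⟩ ≠ A₅. -/

import Mathlib

set_option maxRecDepth 1000000
set_option synthInstance.maxHeartbeats 2000000
set_option synthInstance.maxSize 2000
set_option maxHeartbeats 4000000

open Equiv Pointwise

private lemma aux_pair_tau : ∀ u v : Fin 5, u ≠ 4 → v ≠ 4 → u ≠ v →
    ∃ τ : Equiv.Perm (Fin 5),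
      (τ = Equiv.swap 0 1 * Equiv.swap 2 3 ∨ τ = Equiv.swap 0 2 * Equiv.swap 1 3 ∨
       τ = Equiv.swap 0 3 * Equiv.swap 1 2) ∧ τ u = v ∧ τ v = u := by decide

private lemma aux_invol : ∀ x : Equiv.Perm (Fin 5), x * x = 1 → x 4 = 4 →
    (∀ i : Fin 5, i ≠ 4 → x i ≠ i) →
    (x = Equiv.swap 0 1 * Equiv.swap 2 3 ∨ x = Equiv.swap 0 2 * Equiv.swap 1 3 ∨
     x = Equiv.swap 0 3 * Equiv.swap 1 2) := by decide

private lemma aux_class : ∀ x : Equiv.Perm (Fin 5), x 4 ≠ 4 →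
    (∀ u v : Fin 5, u ≠ 4 → v ≠ 4 → u ≠ v →
       ¬((x u = u ∧ x v = v) ∨ (x u = v ∧ x v = u))) →
    (x ^ 5 = 1 ∨
     (∃ a : Fin 5, a ≠ 4 ∧ x ^ 3 = Equiv.swap 4 a) ∨
     (∃ a b c : Fin 5, a ≠ 4 ∧ a ≠ b ∧ a ≠ c ∧
        x = Equiv.swap a 4 * Equiv.swap a c * Equiv.swap a b)) := by decide

private lemma aux_neg : ∀ k : ZMod 5, -k = k → k = 0 := by decide

private lemma aux_pow45 : ∀ m : ℕ, m < 5 → m ≠ 0 → m ^ 4 % 5 = 1 := by decide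

private lemma card_alt5 : Nat.card (alternatingGroup (Fin 5)) = 60 := by
  have h := two_mul_card_alternatingGroup (α := Fin 5)
  have h2 : Fintype.card (Equiv.Perm (Fin 5)) = 120 := by
    rw [Fintype.card_perm]; rfl
  rw [Nat.card_eq_fintype_card]
  omega

/-- the dihedral bound: if `τ` is an involution inverting an order-5 element `σ`,
then `⟨σ, τ⟩` has at most 10 elements, hence is not `A₅`. -/
private lemma dihedral_case (σ τ : Equiv.Perm (Fin 5))
    (hord : orderOf σ = 5) (hτ2 : τ * τ = 1) (hrel : τ * σ * τ = σ⁻¹) :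
    Subgroup.closure {σ, τ} ≠ alternatingGroup (Fin 5) := by
  have h5 : σ ^ 5 = 1 := by
    have := pow_orderOf_eq_one σ
    rwa [hord] at this
  have hτinv : τ⁻¹ = τ := inv_eq_of_mul_eq_one_right hτ2
  have hinvpow : ∀ j : ℕ, (σ ^ j)⁻¹ = σ ^ (4 * j) := by
    intro j
    have : σ ^ (4 * j) * σ ^ j = 1 := by
      rw [← pow_add]
      have : 4 * j + j = 5 * j := by ring
      rw [this, pow_mul, h5, one_pow]
    exact inv_eq_of_mul_eq_one_left this
  have hts : ∀ j : ℕ, τ * σ ^ j = σ ^ (4 * j) * τ := by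
    intro j
    have h1 : (τ * σ * τ⁻¹) ^ j = τ * σ ^ j * τ⁻¹ := conj_pow
    rw [hτinv, hrel] at h1
    have h2 : τ * σ ^ j * τ = (σ ^ j)⁻¹ := by rw [← inv_pow, h1]
    calc τ * σ ^ j = τ * σ ^ j * τ * τ⁻¹ := by group
    _ = (σ ^ j)⁻¹ * τ := by rw [h2, hτinv]
    _ = σ ^ (4 * j) * τ := by rw [hinvpow]
  set K : Subgroup (Equiv.Perm (Fin 5)) :=
    { carrier := {x | ∃ i : ℕ, x = σ ^ i ∨ x = σ ^ i * τ}
      one_mem' := ⟨0, Or.inl (pow_zero σ).symm⟩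
      mul_mem' := by
        rintro a b ⟨i, rfl | rfl⟩ ⟨j, rfl | rfl⟩
        · exact ⟨i + j, Or.inl (pow_add σ i j).symm⟩
        · exact ⟨i + j, Or.inr (by rw [← mul_assoc, ← pow_add])⟩
        · refine ⟨i + 4 * j, Or.inr ?_⟩
          rw [mul_assoc, hts j, ← mul_assoc, ← pow_add]
        · refine ⟨i + 4 * j, Or.inl ?_⟩
          calc σ ^ i * τ * (σ ^ j * τ) = σ ^ i * (τ * σ ^ j) * τ := by group
          _ = σ ^ i * (σ ^ (4 * j) * τ) * τ := by rw [hts j]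
          _ = σ ^ (i + 4 * j) * (τ * τ) := by rw [pow_add]; group
          _ = σ ^ (i + 4 * j) := by rw [hτ2, mul_one]
      inv_mem' := by
        rintro a ⟨i, rfl | rfl⟩
        · exact ⟨4 * i, Or.inl (by rw [hinvpow])⟩
        · refine ⟨4 * (4 * i), Or.inr ?_⟩
          rw [mul_inv_rev, hτinv, hinvpow, hts]  } with hK
  intro heq
  have hle : Subgroup.closure {σ, τ} ≤ K := by
    rw [Subgroup.closure_le]
    intro x hx
    simp only [Set.mem_insert_iff, Set.mem_singleton_iff] at hx
    rcases hx with h | h <;> rw [h]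
    · exact ⟨1, Or.inl (pow_one σ).symm⟩
    · exact ⟨0, Or.inr (by rw [pow_zero, one_mul])⟩
  have hcard : Nat.card (alternatingGroup (Fin 5)) ≤ Nat.card K :=
    Subgroup.card_le_of_le (heq ▸ hle)
  have hmem : ∀ p : Fin 5 × Fin 2, σ ^ (p.1 : ℕ) * τ ^ (p.2 : ℕ) ∈ K := by
    rintro ⟨i, j⟩
    fin_cases j
    · exact ⟨(i : ℕ), Or.inl (by simp)⟩
    · exact ⟨(i : ℕ), Or.inr (by simp)⟩
  have hsurj : Function.Surjective
      (fun p : Fin 5 × Fin 2 => (⟨σ ^ (p.1 : ℕ) * τ ^ (p.2 : ℕ), hmem p⟩ : K)) := by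
    rintro ⟨x, i, rfl | rfl⟩
    · refine ⟨(⟨i % 5, Nat.mod_lt _ (by norm_num)⟩, 0), ?_⟩
      apply Subtype.ext
      show σ ^ (i % 5) * τ ^ (0 : ℕ) = σ ^ i
      have hmod := pow_mod_orderOf σ i
      rw [hord] at hmod
      rw [pow_zero, mul_one, hmod]
    · refine ⟨(⟨i % 5, Nat.mod_lt _ (by norm_num)⟩, 1), ?_⟩
      apply Subtype.ext
      show σ ^ (i % 5) * τ ^ (1 : ℕ) = σ ^ i * τ
      have hmod := pow_mod_orderOf σ i
      rw [hord] at hmod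
      rw [pow_one, hmod]
  have h10 : Nat.card K ≤ 10 := by
    have := Nat.card_le_card_of_surjective _ hsurj
    simpa using this
  rw [card_alt5] at hcard
  omega

private lemma five_case (σ : Equiv.Perm (Fin 5)) (h4 : σ 4 ≠ 4) (hord : orderOf σ = 5) :
    ∃ τ : Equiv.Perm (Fin 5),
      (τ = Equiv.swap 0 1 * Equiv.swap 2 3 ∨ τ = Equiv.swap 0 2 * Equiv.swap 1 3 ∨
       τ = Equiv.swap 0 3 * Equiv.swap 1 2) ∧
      Subgroup.closure {σ, τ} ≠ alternatingGroup (Fin 5) := by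
  have h5 : σ ^ 5 = 1 := by
    have := pow_orderOf_eq_one σ
    rwa [hord] at this
  haveI : Fact (1 < 5) := ⟨by norm_num⟩
  have hfixp : ∀ (p : Equiv.Perm (Fin 5)) (n : ℕ), p 4 = 4 → (p ^ n) 4 = 4 := by
    intro p n hp
    induction n with
    | zero => simp
    | succ n ih => rw [pow_succ, Equiv.Perm.mul_apply, hp, ih]
  have hfix : ∀ m : ℕ, m < 5 → m ≠ 0 → (σ ^ m) 4 ≠ 4 := by
    intro m hm hm0 h44
    have hm4 : m ^ 4 % 5 = 1 := aux_pow45 m hm hm0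
    have hp : σ ^ (m ^ 4) = σ ^ 1 := by
      rw [pow_eq_pow_iff_modEq, hord]
      show m ^ 4 % 5 = 1 % 5
      simp [hm4]
    have hfour : σ 4 = 4 := by
      have h1 : (σ ^ (m ^ 4)) 4 = 4 := by
        have hmm : m ^ 4 = m * m ^ 3 := by ring
        rw [hmm, pow_mul]
        exact hfixp _ _ h44
      rwa [hp, pow_one] at h1
    exact h4 hfour
  set f : ZMod 5 → Fin 5 := fun k => (σ ^ k.val) 4 with hf
  have key : ∀ a b : ZMod 5, a.val ≤ b.val → f a = f b → a = b := by
    intro a b hle hab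
    set m := b.val - a.val with hm
    have hbval : b.val = a.val + m := by omega
    have h1 : (σ ^ (a.val)) ((σ ^ m) 4) = (σ ^ (a.val)) 4 := by
      rw [← Equiv.Perm.mul_apply, ← pow_add, ← hbval]
      exact hab.symm
    have h2 : (σ ^ m) 4 = 4 := (σ ^ (a.val)).injective h1
    have hm0 : m = 0 := by
      by_contra hm0
      exact hfix m (by have := b.val_lt; omega) hm0 h2
    exact ZMod.val_injective 5 (by omega)
  have finj : Function.Injective f := by
    intro a b hab
    rcases le_total a.val b.val with h | h
    · exact key a b h hab
    · exact (key b a h hab.symm).symm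
  have hbij : Function.Bijective f := by
    rw [Fintype.bijective_iff_injective_and_card]
    exact ⟨finj, by simp [ZMod.card]⟩
  set e : ZMod 5 ≃ Fin 5 := Equiv.ofBijective f hbij with he'
  have he : ∀ k, e k = (σ ^ k.val) 4 := fun k => rfl
  have hs : ∀ k : ZMod 5, σ (e k) = e (k + 1) := by
    intro k
    have h1 : (k + 1).val = (k.val + 1) % 5 := by
      rw [ZMod.val_add, ZMod.val_one]
    have h2 : σ ^ ((k + 1).val) = σ ^ (k.val + 1) := by
      rw [pow_eq_pow_iff_modEq, hord, h1]
      exact Nat.mod_modEq _ 5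
    rw [he, he, h2, pow_succ', Equiv.Perm.mul_apply]
  set τ : Equiv.Perm (Fin 5) := (e.symm.trans (Equiv.neg (ZMod 5))).trans e with hτ
  have hτe : ∀ k, τ (e k) = e (-k) := by
    intro k
    simp [hτ, Equiv.trans_apply, Equiv.symm_apply_apply, Equiv.neg_apply]
  have hτ2 : τ * τ = 1 := by
    apply Equiv.ext
    intro x
    have hx : x = e (e.symm x) := (e.apply_symm_apply x).symm
    rw [Equiv.Perm.one_apply, Equiv.Perm.mul_apply]
    conv_lhs => rw [hx, hτe, hτe, neg_neg]
    exact e.apply_symm_apply x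
  have h40 : e 0 = 4 := by simp [he, ZMod.val_zero]
  have hτ4 : τ 4 = 4 := by rw [← h40, hτe, neg_zero]
  have hτfree : ∀ i : Fin 5, i ≠ 4 → τ i ≠ i := by
    intro i hi hii
    have hx : i = e (e.symm i) := (e.apply_symm_apply i).symm
    rw [hx, hτe] at hii
    have : -(e.symm i) = e.symm i := e.injective hii
    have h0 : e.symm i = 0 := aux_neg _ this
    rw [hx, h0, h40] at hi
    exact hi rfl
  have hrel : τ * σ * τ = σ⁻¹ := by
    apply Equiv.ext
    intro x
    have hx : x = e (e.symm x) := (e.apply_symm_apply x).symm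
    set k := e.symm x with hk
    have hlhs : (τ * σ * τ) x = e (k - 1) := by
      rw [Equiv.Perm.mul_apply, Equiv.Perm.mul_apply, hx, hτe, hs, hτe]
      congr 1
      ring
    have hrhs : σ⁻¹ x = e (k - 1) := by
      have h1 : σ (e (k - 1)) = x := by
        rw [hs, sub_add_cancel]
        exact hx.symm
      rw [← h1]
      exact Equiv.symm_apply_apply σ _
    rw [hlhs, hrhs]
  have hτV := aux_invol τ hτ2 hτ4 hτfree
  exact ⟨τ, hτV, dihedral_case σ τ hord hτ2 hrel⟩

theorem stmt_7 :
    ∀ σ ∈ alternatingGroup (Fin 5),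
      ∃ τ ∈ ({Equiv.swap 0 1 * Equiv.swap 2 3,
              Equiv.swap 0 2 * Equiv.swap 1 3,
              Equiv.swap 0 3 * Equiv.swap 1 2} : Set (Equiv.Perm (Fin 5))),
        Subgroup.closure {σ, τ} ≠ alternatingGroup (Fin 5) := by
  intro σ hσ
  by_cases h4 : σ 4 = 4
  · refine ⟨Equiv.swap 0 1 * Equiv.swap 2 3, Set.mem_insert _ _, ?_⟩
    intro heq
    have hle : Subgroup.closure {σ, Equiv.swap 0 1 * Equiv.swap 2 3} ≤
        MulAction.stabilizer (Equiv.Perm (Fin 5)) (4 : Fin 5) := by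
      rw [Subgroup.closure_le]
      intro x hx
      simp only [Set.mem_insert_iff, Set.mem_singleton_iff] at hx
      simp only [SetLike.mem_coe]
      rcases hx with h | h <;> rw [h, MulAction.mem_stabilizer_iff, Equiv.Perm.smul_def]
      · exact h4
      · decide
    have hg : (Equiv.swap 0 1 * Equiv.swap 1 4 : Equiv.Perm (Fin 5)) ∈ alternatingGroup (Fin 5) := by
      rw [Equiv.Perm.mem_alternatingGroup, Equiv.Perm.sign_mul,
        Equiv.Perm.sign_swap (by decide), Equiv.Perm.sign_swap (by decide)]
      norm_num
    have hgC : (Equiv.swap 0 1 * Equiv.swap 1 4 : Equiv.Perm (Fin 5)) ∈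
        Subgroup.closure {σ, Equiv.swap 0 1 * Equiv.swap 2 3} := by rw [heq]; exact hg
    have hmem := hle hgC
    rw [MulAction.mem_stabilizer_iff, Equiv.Perm.smul_def] at hmem
    exact absurd hmem (by decide)
  by_cases hpair : ∃ u v : Fin 5, u ≠ 4 ∧ v ≠ 4 ∧ u ≠ v ∧
      ((σ u = u ∧ σ v = v) ∨ (σ u = v ∧ σ v = u))
  · obtain ⟨u, v, hu, hv, huv, hcase⟩ := hpair
    obtain ⟨τ, hτV, hτu, hτv⟩ := aux_pair_tau u v hu hv huv
    refine ⟨τ, ?_, ?_⟩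
    · rcases hτV with h | h | h <;> rw [h] <;> simp
    intro heq
    have hle : Subgroup.closure {σ, τ} ≤
        MulAction.stabilizer (Equiv.Perm (Fin 5)) ({u, v} : Set (Fin 5)) := by
      rw [Subgroup.closure_le]
      intro x hx
      simp only [Set.mem_insert_iff, Set.mem_singleton_iff] at hx
      simp only [SetLike.mem_coe]
      rcases hx with h | h <;>
        rw [h, MulAction.mem_stabilizer_iff, Set.smul_set_insert, Set.smul_set_singleton,
          Equiv.Perm.smul_def, Equiv.Perm.smul_def]
      · rcases hcase with ⟨h1, h2⟩ | ⟨h1, h2⟩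
        · rw [h1, h2]
        · rw [h1, h2, Set.pair_comm]
      · rw [hτu, hτv, Set.pair_comm]
    have hgA : (Equiv.swap u 4 * Equiv.swap u v : Equiv.Perm (Fin 5)) ∈
        alternatingGroup (Fin 5) := by
      rw [Equiv.Perm.mem_alternatingGroup, Equiv.Perm.sign_mul,
        Equiv.Perm.sign_swap hu, Equiv.Perm.sign_swap huv]
      norm_num
    have hgC : Equiv.swap u 4 * Equiv.swap u v ∈ Subgroup.closure {σ, τ} := by
      rw [heq]; exact hgA
    have hst := hle hgC
    rw [MulAction.mem_stabilizer_iff] at hst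
    have h4m : (4 : Fin 5) ∈
        (Equiv.swap u 4 * Equiv.swap u v : Equiv.Perm (Fin 5)) • ({u, v} : Set (Fin 5)) := by
      refine Set.mem_smul_set.mpr ⟨v, Set.mem_insert_of_mem _ rfl, ?_⟩
      rw [Equiv.Perm.smul_def, Equiv.Perm.mul_apply, Equiv.swap_apply_right,
        Equiv.swap_apply_left]
    rw [hst] at h4m
    simp only [Set.mem_insert_iff, Set.mem_singleton_iff] at h4m
    rcases h4m with h | h
    · exact hu h.symm
    · exact hv h.symm
  · push_neg at hpair
    have hpair' : ∀ u v : Fin 5, u ≠ 4 → v ≠ 4 → u ≠ v →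
        ¬((σ u = u ∧ σ v = v) ∨ (σ u = v ∧ σ v = u)) := by
      intro u v h1 h2 h3 hor
      rcases hor with h | h
      · exact (hpair u v h1 h2 h3).1 h.1 h.2
      · exact (hpair u v h1 h2 h3).2 h.1 h.2
    rcases aux_class σ h4 hpair' with h5 | ⟨a, ha, h3⟩ | ⟨a, b, c, ha4, hab, hac, hx⟩
    · have hne : σ ≠ 1 := by
        intro h
        rw [h] at h4
        exact h4 rfl
      haveI : Fact (Nat.Prime 5) := ⟨by norm_num⟩
      have hord : orderOf σ = 5 := orderOf_eq_prime h5 hne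
      obtain ⟨τ, hτV, hne'⟩ := five_case σ h4 hord
      refine ⟨τ, ?_, hne'⟩
      rcases hτV with h | h | h <;> rw [h] <;> simp
    · exfalso
      have hsign := Equiv.Perm.mem_alternatingGroup.mp hσ
      have hs3 : Equiv.Perm.sign (σ ^ 3) = 1 := by rw [map_pow, hsign, one_pow]
      rw [h3, Equiv.Perm.sign_swap (Ne.symm ha)] at hs3
      exact absurd hs3 (by decide)
    · exfalso
      have hsign := Equiv.Perm.mem_alternatingGroup.mp hσ
      rw [hx, map_mul, map_mul, Equiv.Perm.sign_swap ha4, Equiv.Perm.sign_swap hac,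
        Equiv.Perm.sign_swap hab] at hsign
      exact absurd hsign (by decide)
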